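/- Let G be a countable, locally finite graph and let β ∈ [0,∞]. If Q is an extremal point of the convex set of augmented β-arboreal gas Gibbs measures on G (meaning that whenever Q = tQ₁ + (1−t)Q₂ with t ∈ (0,1) and Q₁, Q₂ augmented β-arboreal gas Gibbs measures on G, one has Q₁ = Q₂), then Q is tail-trivial: Q(X) ∈ {0,1} for every tail event X ∈ 𝒯. -/

import Mathlib

open MeasureTheory
open scoped ENNReal symmDiff

noncomputable section

namespace ArborealGas

variable {V : Type*} (G : SimpleGraph V)

/-- The (inner vertex) boundary of a subgraph `H` relative to the host subgraph `Γ` of `G`: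
the vertices of `H` incident to an edge of `Γ` not belonging to `H`. -/
def bdry (Γ H : G.Subgraph) : Set V :=
  {v | v ∈ H.verts ∧ ∃ u, Γ.Adj v u ∧ ¬ H.Adj v u}

/-- Restriction of a relation to pairs inside a set. -/
def restrictRel (B : Set V) (φ : V → V → Prop) : V → V → Prop :=
  fun a b => a ∈ B ∧ b ∈ B ∧ φ a b

/-- `u` and `v` are connected in the quotient graph `F/φ` (the graph obtained from
`F` by identifying vertices of `F` lying in a common class of `φ`). -/
def quotConn (F : G.Subgraph) (φ : V → V → Prop) : V → V → Prop :=
  Relation.ReflTransGen fun a b =>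
    F.Adj a b ∨ (a ∈ F.verts ∧ b ∈ F.verts ∧ φ a b)

/-- `F` extends the boundary condition `φ` (an equivalence relation on the boundary of `H`
in the host `Γ`): the quotient `F/φ` is acyclic, i.e. every edge of `F` is a bridge of `F/φ`. -/
def Extends (Γ H : G.Subgraph) (φ : V → V → Prop) (F : G.Subgraph) : Prop :=
  ∀ a b, F.Adj a b →
    ¬ quotConn G (F.deleteEdges {s(a, b)}) (restrictRel (bdry G Γ H) φ) a b

/-- `F` is a spanning forest of `H` extending the boundary condition `φ`:
an element of `𝓕(H,φ)` containing every vertex of `H`. -/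
def IsSpanningForestExtending (Γ H : G.Subgraph) (φ : V → V → Prop) (F : G.Subgraph) : Prop :=
  F ≤ H ∧ F.verts = H.verts ∧ Extends G Γ H φ F

/-- `F` is an `(H,φ)`-maximal spanning forest: no edge of `H` can be added to `F`
while remaining a spanning forest extending `φ`. -/
def IsMaximalSpanningForestExtending (Γ H : G.Subgraph) (φ : V → V → Prop)
    (F : G.Subgraph) : Prop :=
  IsSpanningForestExtending G Γ H φ F ∧
    ∀ a b, (hab : H.Adj a b) → ¬ F.Adj a b →
      ¬ IsSpanningForestExtending G Γ H φ (F ⊔ G.subgraphOfAdj (H.adj_sub hab))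

open Classical in
/-- The unnormalized arboreal gas weight `β ^ |F|` of a spanning forest `F` of `H`
extending `φ` (with the convention `0 ^ 0 = 1`); for `β = ∞` the uniform weight on
`(H,φ)`-maximal spanning forests. -/
def gibbsWeight (β : ℝ≥0∞) (Γ H : G.Subgraph) (φ : V → V → Prop) (F : G.Subgraph) : ℝ≥0∞ :=
  if β = ⊤ then (if IsMaximalSpanningForestExtending G Γ H φ F then 1 else 0)
  else if IsSpanningForestExtending G Γ H φ F then β ^ F.edgeSet.ncard else 0

/-- The σ-algebra on the space of subgraphs of `G`: the product (cylinder) σ-algebra,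
generated by the vertex- and edge-membership maps. -/
instance subgraphMeasurableSpace : MeasurableSpace G.Subgraph :=
  MeasurableSpace.comap
    (fun S => ((fun v => v ∈ S.verts), S.Adj) :
      G.Subgraph → (V → Prop) × (V → V → Prop)) inferInstance

/-- The finite-volume `β`-arboreal gas Gibbs measure `P^φ_{H,β}` on the finite subgraph `H`
of the host graph `Γ` with boundary condition `φ`, regarded as a measure on subgraphs of `G`:
each spanning forest `F` of `H` extending `φ` gets probability proportional to `β ^ |F|`
(uniform on `(H,φ)`-maximal spanning forests when `β = ∞`). -/
def finGibbs (β : ℝ≥0∞) (Γ H : G.Subgraph) (φ : V → V → Prop) : Measure G.Subgraph :=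
  (∑' F : G.Subgraph, gibbsWeight G β Γ H φ F)⁻¹ •
    Measure.sum fun F : G.Subgraph => gibbsWeight G β Γ H φ F • Measure.dirac F

/-- The raw space in which augmented subgraphs of `G` live: pairs `(S, Φ)` of a subgraph `S`
of `G` and a boundary map `Φ` assigning to each (finite) subgraph `H` a relation on `V`.
It carries the product Borel σ-algebra. -/
abbrev AugSub := G.Subgraph × (G.Subgraph → V → V → Prop)

/-- `φ` is an equivalence relation on the set `B` (relating only elements of `B`). -/
def IsEquivRelOn (B : Set V) (φ : V → V → Prop) : Prop :=
  (∀ u v, φ u v → u ∈ B ∧ v ∈ B) ∧ (∀ u ∈ B, φ u u) ∧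
    (∀ u v, φ u v → φ v u) ∧ (∀ u v w, φ u v → φ v w → φ u w)

/-- `(S, Φ)` is an augmented subgraph of the host graph `Γ ≤ G`: `S ≤ Γ`, for each finite
subgraph `H` of `Γ` the relation `Φ(H)` is an equivalence relation on the boundary `∂H`,
and the consistency condition holds: for finite subgraphs `H ⊆ K` of `Γ` and `u, v ∈ ∂H`,
`u` and `v` are `Φ(H)`-related iff they are connected in `((S ⊓ K) ∖ E[H])/Φ(K)`. -/
def IsAugmentedIn (Γ : G.Subgraph) (A : AugSub G) : Prop :=
  A.1 ≤ Γ ∧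
  (∀ H : G.Subgraph, H ≤ Γ → H.verts.Finite → IsEquivRelOn (bdry G Γ H) (A.2 H)) ∧
  (∀ H K : G.Subgraph, H ≤ K → K ≤ Γ → K.verts.Finite →
    ∀ u v, u ∈ bdry G Γ H → v ∈ bdry G Γ H →
      (A.2 H u v ↔
        quotConn G ((A.1 ⊓ K).deleteEdges H.edgeSet)
          (restrictRel (bdry G Γ K) (A.2 K)) u v))

/-- The data of an augmented subgraph `(S, Φ)` determined outside the finite subgraph `H`:
the subgraph `S ∖ E[H]` together with the family `Φ_H = (Φ(K) : K ⊇ H finite)`. -/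
def outsideMap (Γ H : G.Subgraph) (A : AugSub G) :
    G.Subgraph × (G.Subgraph → V → V → Prop) :=
  (A.1.deleteEdges H.edgeSet,
    fun K u v => (H ≤ K ∧ K ≤ Γ ∧ K.verts.Finite) ∧ A.2 K u v)

/-- The σ-algebra `𝒢_H` on augmented subgraphs generated by `(S, Φ) ↦ (S ∖ E[H], Φ_H)`. -/
def outSigma (Γ H : G.Subgraph) : MeasurableSpace (AugSub G) :=
  MeasurableSpace.comap (outsideMap G Γ H) inferInstance

/-- A tail event: an event belonging to `𝒢_H` for every finite subgraph `H`. -/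
def IsTailEvent (Γ : G.Subgraph) (X : Set (AugSub G)) : Prop :=
  ∀ H : G.Subgraph, H ≤ Γ → H.verts.Finite → MeasurableSet[outSigma G Γ H] X

/-- `Q` is an augmented `β`-arboreal gas Gibbs measure on the host graph `Γ ≤ G`:
a probability measure on augmented subgraphs of `Γ` such that for every finite subgraph `H`
of `Γ` and every subgraph `F₀` of `H`, the conditional probability of `{A ∩ H = F₀}` given
`𝒢_H` is almost surely `P^{Φ(H)}_{H,β}(F₀)`. -/
def IsAugGibbs (β : ℝ≥0∞) (Γ : G.Subgraph) (Q : Measure (AugSub G)) : Prop :=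
  IsProbabilityMeasure Q ∧
  Q {A : AugSub G | IsAugmentedIn G Γ A} = 1 ∧
  ∀ H : G.Subgraph, H ≤ Γ → H.verts.Finite →
    ∀ F₀ : G.Subgraph, F₀ ≤ H →
      (Q[({A : AugSub G | A.1 ⊓ H = F₀}).indicator (fun _ => (1 : ℝ)) | outSigma G Γ H])
        =ᵐ[Q] fun A => (finGibbs G β Γ H (A.2 H) {F₀}).toReal

/-- `P` is a `β`-arboreal gas Gibbs measure on the host graph `Γ ≤ G`: the pushforward of
some augmented `β`-arboreal gas Gibbs measure (a Gibbs augmentation of `P`) under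
`(S, Φ) ↦ S`. -/
def IsGibbs (β : ℝ≥0∞) (Γ : G.Subgraph) (P : Measure G.Subgraph) : Prop :=
  ∃ Q : Measure (AugSub G), IsAugGibbs G β Γ Q ∧ Q.map Prod.fst = P

/-- The finite subgraph with vertex set `{u, v}` and no edges. -/
def pairSub (u v : V) : G.Subgraph where
  verts := {u, v}
  Adj _ _ := False
  adj_sub h := h.elim
  edge_vert h := h.elim
  symm := ⟨fun _ _ h => h.elim⟩

/-- The augmented connectivity relation of an augmented subgraph `(S, Φ)`:
`u ↔ v` iff `Φ({u,v})(u,v) = 1`. -/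
def augConn (A : AugSub G) (u v : V) : Prop :=
  A.2 (pairSub G u v) u v

/-- The subgraph of `G` induced by a set `I` of vertices. -/
def traceSub (I : Set V) : G.Subgraph where
  verts := I
  Adj u v := G.Adj u v ∧ u ∈ I ∧ v ∈ I
  adj_sub h := h.1
  edge_vert h := h.2.1
  symm := ⟨fun _ _ h => ⟨G.adj_symm h.1, h.2.2, h.2.1⟩⟩

/-- A subgraph is connected: nonempty vertex set, any two vertices joined by a path. -/
def SubConnected (S : G.Subgraph) : Prop :=
  S.verts.Nonempty ∧ ∀ u ∈ S.verts, ∀ v ∈ S.verts, Relation.ReflTransGen S.Adj u v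

/-- The hypercubic lattice `ℤ^d`: vertices `Fin d → ℤ`, edges between points at
`ℓ¹`-distance one. -/
def ZdGraph (d : ℕ) : SimpleGraph (Fin d → ℤ) where
  Adj x y := ∑ i, (x i - y i).natAbs = 1
  symm := by
    constructor
    intro x y h
    rw [← h]
    exact Finset.sum_congr rfl fun i _ => by omega
  loopless := by constructor; intro x h; simp at h

/-- Translation of subgraphs of `ℤ^d` by a lattice vector `t`. -/
def translateSub {d : ℕ} (t : Fin d → ℤ) (S : (ZdGraph d).Subgraph) : (ZdGraph d).Subgraph where
  verts := {v | v - t ∈ S.verts}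
  Adj u v := S.Adj (u - t) (v - t)
  adj_sub := by
    intro u v h
    have h2 := S.adj_sub h
    simpa [ZdGraph, sub_sub_sub_cancel_right] using h2
  edge_vert := by intro u v h; exact S.edge_vert h
  symm := ⟨fun _ _ h => S.adj_symm h⟩

/-- Translation of augmented subgraphs of `ℤ^d` by a lattice vector `t`:
`(τ_t Φ)(H)(u,v) = Φ(H - t)(u - t, v - t)`. -/
def translateAug {d : ℕ} (t : Fin d → ℤ) (A : AugSub (ZdGraph d)) : AugSub (ZdGraph d) :=
  (translateSub t A.1, fun K u v => A.2 (translateSub (-t) K) (u - t) (v - t))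

/-- A translation-invariant augmented `β`-arboreal gas Gibbs measure on `ℤ^d`. -/
def IsTransInvAugGibbs (d : ℕ) (β : ℝ≥0∞) (Q : Measure (AugSub (ZdGraph d))) : Prop :=
  IsAugGibbs (ZdGraph d) β ⊤ Q ∧ ∀ t, Q.map (translateAug t) = Q

/-- An extremal point of the convex set of translation-invariant augmented `β`-arboreal gas
Gibbs measures on `ℤ^d`. -/
def IsExtremalTransInvAugGibbs (d : ℕ) (β : ℝ≥0∞)
    (Q : Measure (AugSub (ZdGraph d))) : Prop :=
  IsTransInvAugGibbs d β Q ∧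
    ∀ (Q₁ Q₂ : Measure (AugSub (ZdGraph d))) (t : ℝ≥0∞), 0 < t → t < 1 →
      IsTransInvAugGibbs d β Q₁ → IsTransInvAugGibbs d β Q₂ →
      Q = t • Q₁ + (1 - t) • Q₂ → Q₁ = Q₂

section AuxTail

variable {W : Type*} {G' : SimpleGraph W}

lemma measurable_subgraphRepr :
    Measurable (fun S : G'.Subgraph =>
      (((fun v => v ∈ S.verts), S.Adj) : (W → Prop) × (W → W → Prop))) :=
  Measurable.of_comap_le le_rfl

lemma measurable_mem_verts (v : W) : Measurable fun S : G'.Subgraph => v ∈ S.verts :=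
  (measurable_pi_apply v).comp (measurable_fst.comp measurable_subgraphRepr)

lemma measurable_adj' (u v : W) : Measurable fun S : G'.Subgraph => S.Adj u v :=
  (measurable_pi_apply v).comp ((measurable_pi_apply u).comp
    (measurable_snd.comp measurable_subgraphRepr))

lemma measurable_toSubgraph {α : Type*} [MeasurableSpace α] {f : α → G'.Subgraph}
    (h1 : ∀ v, Measurable fun a => v ∈ (f a).verts)
    (h2 : ∀ u v, Measurable fun a => (f a).Adj u v) : Measurable f := by
  intro s hs
  obtain ⟨t, ht, rfl⟩ := hs
  have hgf : Measurable fun a =>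
      ((((fun v => v ∈ (f a).verts), (f a).Adj)) : (W → Prop) × (W → W → Prop)) :=
    Measurable.prodMk (measurable_pi_lambda _ h1)
      (measurable_pi_lambda _ fun u => measurable_pi_lambda _ fun v => h2 u v)
  exact hgf ht

lemma measurable_prop_not {α : Type*} [MeasurableSpace α] {p : α → Prop}
    (hp : Measurable p) : Measurable fun a => ¬ p a :=
  measurableSet_setOf.mp ((measurableSet_setOf.mpr hp).compl)

lemma measurable_prop_and_const {α : Type*} [MeasurableSpace α] {p : α → Prop}
    (hp : Measurable p) (c : Prop) : Measurable fun a => p a ∧ c := by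
  by_cases hc : c
  · simpa [hc] using hp
  · simpa [hc] using (measurable_const : Measurable fun _ : α => False)

lemma measurable_const_and {α : Type*} [MeasurableSpace α] (c : Prop) {p : α → Prop}
    (hp : Measurable p) : Measurable fun a => c ∧ p a := by
  by_cases hc : c
  · simpa [hc] using hp
  · simpa [hc] using (measurable_const : Measurable fun _ : α => False)

lemma measurable_prop_iff_const {α : Type*} [MeasurableSpace α] {p : α → Prop}
    (hp : Measurable p) (c : Prop) : Measurable fun a => (p a ↔ c) := by
  by_cases hc : c
  · simpa [hc] using hp
  · simpa [hc] using measurable_prop_not hp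

lemma measurable_phi (K : G'.Subgraph) (u v : W) :
    Measurable fun A : AugSub G' => A.2 K u v :=
  (measurable_pi_apply v).comp ((measurable_pi_apply u).comp
    ((measurable_pi_apply K).comp measurable_snd))

lemma measurable_outsideMap (Γ H : G'.Subgraph) : Measurable (outsideMap G' Γ H) := by
  have h1 : Measurable fun A : AugSub G' => A.1.deleteEdges H.edgeSet := by
    refine measurable_toSubgraph (fun v => ?_) (fun u v => ?_)
    · simp only [SimpleGraph.Subgraph.deleteEdges_verts]
      exact (measurable_mem_verts v).comp measurable_fst
    · simp only [SimpleGraph.Subgraph.deleteEdges_adj]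
      exact measurable_prop_and_const ((measurable_adj' u v).comp measurable_fst) _
  have h2 : Measurable fun A : AugSub G' =>
      (fun K u v => ((H ≤ K ∧ K ≤ Γ ∧ K.verts.Finite) ∧ A.2 K u v) :
        G'.Subgraph → W → W → Prop) :=
    measurable_pi_lambda _ fun K => measurable_pi_lambda _ fun u =>
      measurable_pi_lambda _ fun v => measurable_const_and _ (measurable_phi K u v)
  exact h1.prodMk h2

lemma outSigma_le (Γ H : G'.Subgraph) :
    outSigma G' Γ H ≤ (inferInstance : MeasurableSpace (AugSub G')) :=
  measurable_iff_comap_le.mp (measurable_outsideMap Γ H)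

lemma measurableSet_interEq [Countable W] (H F₀ : G'.Subgraph) :
    MeasurableSet {A : AugSub G' | A.1 ⊓ H = F₀} := by
  have hset : {A : AugSub G' | A.1 ⊓ H = F₀} =
      (⋂ v : W, {A : AugSub G' | (v ∈ A.1.verts ∧ v ∈ H.verts) ↔ v ∈ F₀.verts}) ∩
      ⋂ (u : W) (v : W), {A : AugSub G' | (A.1.Adj u v ∧ H.Adj u v) ↔ F₀.Adj u v} := by
    ext A
    simp only [Set.mem_setOf_eq, Set.mem_inter_iff, Set.mem_iInter]
    constructor
    · rintro rfl
      exact ⟨fun v => Iff.rfl, fun u v => Iff.rfl⟩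
    · rintro ⟨hv, he⟩
      refine SimpleGraph.Subgraph.ext (Set.ext fun v => hv v) ?_
      funext u v
      exact propext (he u v)
  rw [hset]
  refine MeasurableSet.inter (MeasurableSet.iInter fun v => ?_)
    (MeasurableSet.iInter fun u => MeasurableSet.iInter fun v => ?_)
  · exact measurableSet_setOf.mpr (measurable_prop_iff_const
      (measurable_prop_and_const ((measurable_mem_verts v).comp measurable_fst) _) _)
  · exact measurableSet_setOf.mpr (measurable_prop_iff_const
      (measurable_prop_and_const ((measurable_adj' u v).comp measurable_fst) _) _)

lemma restrict_measure_eq_of_one {α : Type*} [MeasurableSpace α] (Q : Measure α)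
    [IsProbabilityMeasure Q] (X S : Set α) (hS : Q S = 1) : Q.restrict X S = Q X := by
  refine le_antisymm
    ((measure_mono (Set.subset_univ S)).trans_eq (Measure.restrict_apply_univ X)) ?_
  conv_rhs => rw [measure_eq_iInf]
  refine le_iInf fun U => le_iInf fun hSU => le_iInf fun hU => ?_
  have hU1 : Q U = 1 := le_antisymm prob_le_one (hS ▸ measure_mono hSU)
  have hUc : Q Uᶜ = 0 := by
    rw [measure_compl hU (measure_ne_top _ _), measure_univ, hU1, tsub_self]
  have h3 : Q.restrict X Uᶜ = 0 := by
    rw [Measure.restrict_apply hU.compl]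
    exact le_antisymm ((measure_mono Set.inter_subset_left).trans hUc.le) zero_le
  calc Q X = Q.restrict X Set.univ := (Measure.restrict_apply_univ X).symm
    _ ≤ Q.restrict X U + Q.restrict X Uᶜ := by
        refine le_trans (measure_mono ?_) (measure_union_le U Uᶜ)
        rw [Set.union_compl_self]
    _ = Q.restrict X U := by rw [h3, add_zero]

lemma condexp_smul_measure_ae {α : Type*} {m m0 : MeasurableSpace α} (hm : m ≤ m0)
    (ν : Measure α) [IsFiniteMeasure ν] {c : ℝ≥0∞} (hc : c ≠ 0) (hc' : c ≠ ⊤) {f : α → ℝ}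
    (hf : Integrable f ν) : (c • ν)[f|m] =ᵐ[ν] ν[f|m] := by
  haveI : IsFiniteMeasure (c • ν) := by
    refine ⟨?_⟩
    rw [Measure.smul_apply, smul_eq_mul]
    exact ENNReal.mul_lt_top hc'.lt_top (measure_lt_top ν _)
  have hfc : Integrable f (c • ν) := (integrable_smul_measure hc hc').mpr hf
  have h : ν[f|m] =ᵐ[c • ν] (c • ν)[f|m] := by
    refine ae_eq_condExp_of_forall_setIntegral_eq hm hfc ?_ ?_ ?_
    · intro s _ _
      rw [IntegrableOn, Measure.restrict_smul]
      exact (integrable_smul_measure hc hc').mpr integrable_condExp.integrableOn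
    · intro s hs _
      rw [show (c • ν).restrict s = c • ν.restrict s from Measure.restrict_smul c ν s,
        integral_smul_measure, integral_smul_measure]
      congr 1
      exact setIntegral_condExp hm hf hs
    · exact StronglyMeasurable.aestronglyMeasurable stronglyMeasurable_condExp
  have hae : ae (c • ν) = ae ν := Filter.ext fun s => by
    simp [mem_ae_iff, Measure.smul_apply, hc]
  exact hae ▸ h.symm

end AuxTail

/-- extremal augmented Gibbs measures are tail-trivial. Let `G` be a
countable, locally finite graph and `β ∈ [0,∞]`. If `Q` is an extremal point of the convex
set of augmented `β`-arboreal gas Gibbs measures on `G`, then `Q(X) ∈ {0,1}` for every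
tail event `X ∈ 𝒯`. -/
theorem extremal_implies_tail_trivial
    {V : Type*} [Countable V] (G : SimpleGraph V)
    (hlf : ∀ v : V, (G.neighborSet v).Finite)
    (β : ℝ≥0∞) (Q : Measure (AugSub G)) (hQ : IsAugGibbs G β ⊤ Q)
    (hext : ∀ (Q₁ Q₂ : Measure (AugSub G)) (t : ℝ≥0∞), 0 < t → t < 1 →
      IsAugGibbs G β ⊤ Q₁ → IsAugGibbs G β ⊤ Q₂ →
      Q = t • Q₁ + (1 - t) • Q₂ → Q₁ = Q₂)
    (X : Set (AugSub G)) (hX : IsTailEvent G ⊤ X) :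
    Q X = 0 ∨ Q X = 1 := by
  by_contra hcontra
  push_neg at hcontra
  obtain ⟨h0, h1⟩ := hcontra
  obtain ⟨hPQ, hAug, hcond⟩ := hQ
  haveI := hPQ
  -- X is measurable in the ambient σ-algebra
  have hXm : MeasurableSet X := by
    refine outSigma_le ⊤ ⊥ X (hX ⊥ le_top ?_)
    simp [SimpleGraph.Subgraph.verts_bot]
  have hQXne : Q X ≠ ⊤ := measure_ne_top Q X
  have hQXlt : Q X < 1 := lt_of_le_of_ne prob_le_one h1
  have hQXc : Q Xᶜ = 1 - Q X := by
    rw [measure_compl hXm hQXne, measure_univ]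
  have hQXc0 : Q Xᶜ ≠ 0 := by
    rw [hQXc]
    intro hzero
    exact h1 (le_antisymm prob_le_one (tsub_eq_zero_iff_le.mp hzero))
  -- conditioning `Q` on a tail-measurable set of positive measure yields a Gibbs measure
  have key : ∀ Y : Set (AugSub G), MeasurableSet Y → Q Y ≠ 0 →
      (∀ H : G.Subgraph, H ≤ ⊤ → H.verts.Finite → MeasurableSet[outSigma G ⊤ H] Y) →
      IsAugGibbs G β ⊤ ((Q Y)⁻¹ • Q.restrict Y) := by
    intro Y hYm hY0 hYtail
    have hYne : Q Y ≠ ⊤ := measure_ne_top Q Y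
    have hcY0 : (Q Y)⁻¹ ≠ 0 := ENNReal.inv_ne_zero.mpr hYne
    have hcY' : (Q Y)⁻¹ ≠ ⊤ := ENNReal.inv_ne_top.mpr hY0
    refine ⟨⟨?_⟩, ?_, ?_⟩
    · rw [Measure.smul_apply, Measure.restrict_apply_univ, smul_eq_mul,
        ENNReal.inv_mul_cancel hY0 hYne]
    · rw [Measure.smul_apply, smul_eq_mul,
        restrict_measure_eq_of_one Q Y _ hAug, ENNReal.inv_mul_cancel hY0 hYne]
    · intro H hH hHfin F₀ hF₀
      have hm : outSigma G ⊤ H ≤ (inferInstance : MeasurableSpace (AugSub G)) :=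
        outSigma_le ⊤ H
      have hfmeas : MeasurableSet {A : AugSub G | A.1 ⊓ H = F₀} := measurableSet_interEq H F₀
      have hf : Integrable (({A : AugSub G | A.1 ⊓ H = F₀}).indicator
          (fun _ => (1 : ℝ))) Q := (integrable_const (1 : ℝ)).indicator hfmeas
      have hfν : Integrable (({A : AugSub G | A.1 ⊓ H = F₀}).indicator
          (fun _ => (1 : ℝ))) (Q.restrict Y) := hf.restrict
      have hA := condexp_smul_measure_ae hm (Q.restrict Y) hcY0 hcY' hfν
      have hB := condExp_restrict_ae_eq_restrict (μ := Q) hm (hYtail H hH hHfin) hf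
      have hC := hcond H hH hHfin F₀ hF₀
      have hC' := hC.filter_mono (ae_mono (Measure.restrict_le_self (s := Y)))
      have hchain := hA.trans (hB.trans hC')
      have hae : ae ((Q Y)⁻¹ • Q.restrict Y) = ae (Q.restrict Y) := Filter.ext fun s => by
          simp [mem_ae_iff, Measure.smul_apply, hcY0]
      exact hae.symm ▸ hchain
  have hXcm : MeasurableSet Xᶜ := hXm.compl
  have hkey₁ := key X hXm h0 (fun H hH hf => hX H hH hf)
  have hkey₂ := key Xᶜ hXcm hQXc0 (fun H hH hf => (hX H hH hf).compl)
  have hdec : Q = Q X • ((Q X)⁻¹ • Q.restrict X) + (1 - Q X) • ((Q Xᶜ)⁻¹ • Q.restrict Xᶜ) := by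
    rw [← hQXc, smul_smul, smul_smul, ENNReal.mul_inv_cancel h0 hQXne,
      ENNReal.mul_inv_cancel hQXc0 (measure_ne_top Q Xᶜ), one_smul, one_smul,
      Measure.restrict_add_restrict_compl hXm]
  have heq := hext _ _ (Q X) (pos_iff_ne_zero.mpr h0) hQXlt hkey₁ hkey₂ hdec
  have hQ1X : ((Q X)⁻¹ • Q.restrict X) X = 1 := by
    rw [Measure.smul_apply, Measure.restrict_apply hXm, Set.inter_self, smul_eq_mul,
      ENNReal.inv_mul_cancel h0 hQXne]
  have hQ2X : ((Q Xᶜ)⁻¹ • Q.restrict Xᶜ) X = 0 := by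
    rw [Measure.smul_apply, Measure.restrict_apply hXm, Set.inter_compl_self,
      measure_empty, smul_eq_mul, mul_zero]
  rw [heq, hQ2X] at hQ1X
  exact zero_ne_one hQ1X

end ArborealGas

end
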